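/- Let θ₁, θ₂ be commuting measure-preserving transformations of a probability space (Ω, P) and A a measurable set with P(A) > 0. Then liminf_{n→∞} (1/n) Σ_{i=1}^{n} P(A ∩ θ₁^{-i} A ∩ θ₂^{-i} A) > 0. -/

import Mathlib

open MeasureTheory Filter
open scoped ENNReal

set_option linter.unusedSectionVars false
set_option maxHeartbeats 1000000

section FKAux

variable {Ω : Type*} [MeasurableSpace Ω]

private lemma fk_indicator_mul (s t : Set Ω) (x : Ω) :
    s.indicator (fun _ => (1:ℝ)) x * t.indicator (fun _ => (1:ℝ)) x
      = (s ∩ t).indicator (fun _ => (1:ℝ)) x := by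
  by_cases hs : x ∈ s <;> by_cases ht : x ∈ t <;>
    simp [Set.indicator_apply, hs, ht, Set.mem_inter_iff]

private lemma fk_sq_integral (P : Measure Ω) [IsProbabilityMeasure P] (f : Ω → ℝ)
    (hf : Integrable f P) (hf2 : Integrable (fun x => f x * f x) P) :
    (∫ x, f x ∂P) * (∫ x, f x ∂P) ≤ ∫ x, f x * f x ∂P := by
  set c := ∫ x, f x ∂P with hc
  have h0 : 0 ≤ ∫ x, (f x - c) * (f x - c) ∂P := integral_nonneg fun x => mul_self_nonneg _
  have hexp : (fun x => (f x - c) * (f x - c)) = fun x => (f x * f x - (2*c) * f x) + c * c := by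
    funext x; ring
  rw [hexp] at h0
  have hint1 : Integrable (fun x => f x * f x - (2*c) * f x) P := hf2.sub (hf.const_mul _)
  have e1 : ∫ x, ((f x * f x - (2*c) * f x) + c*c) ∂P
      = (∫ x, (f x * f x - (2*c)*f x) ∂P) + ∫ _x, (c*c : ℝ) ∂P := integral_add hint1 (integrable_const _)
  have e2 : ∫ x, (f x * f x - (2*c)*f x) ∂P = (∫ x, f x * f x ∂P) - ∫ x, (2*c)*f x ∂P :=
    integral_sub hf2 (hf.const_mul _)
  have e3 : ∫ x, (2*c)*f x ∂P = (2*c) * c := by rw [MeasureTheory.integral_const_mul]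
  have e4 : ∫ _x, (c*c:ℝ) ∂P = c*c := by simp
  rw [e1, e2, e3, e4] at h0
  nlinarith [h0]

/-- The key one-scale lemma, obtained from the corners theorem by symmetrization. -/
private lemma fk_key (P : Measure Ω) [IsProbabilityMeasure P] (ψ₁ ψ₂ : Ω → Ω)
    (h₁ : MeasurePreserving ψ₁ P P) (h₂ : MeasurePreserving ψ₂ P P)
    (hc : Function.Commute ψ₁ ψ₂)
    (A : Set Ω) (hA : MeasurableSet A) (δ : ℝ) (hδ0 : 0 < δ) (hδ : δ ≤ (P A).toReal)
    (N : ℕ) (hN1 : 1 ≤ N) (hN : cornersTheoremBound (δ^2/18/9) ≤ N) :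
    ∃ e, 1 ≤ e ∧ e ≤ N ∧
      δ^2/162/(N:ℝ)^3 ≤ (P (A ∩ ψ₁^[e] ⁻¹' A ∩ ψ₂^[e] ⁻¹' A)).toReal := by
  classical
  set Θ : ℕ → ℕ → Ω → Ω := fun u v => ψ₁^[u] ∘ ψ₂^[v] with hΘ
  have mp : ∀ u v, MeasurePreserving (Θ u v) P P := fun u v => (h₁.iterate u).comp (h₂.iterate v)
  set C : ℕ → ℕ → Set Ω := fun u v => Θ u v ⁻¹' A with hCdef
  have hCm : ∀ u v, MeasurableSet (C u v) := fun u v => (mp u v).measurable hA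
  have hPC : ∀ u v, P (C u v) = P A := fun u v => (mp u v).measure_preimage hA.nullMeasurableSet
  -- pattern identity
  have hpat : ∀ u v e, C u v ∩ C (u+e) v ∩ C u (v+e) =
      Θ u v ⁻¹' (A ∩ ψ₁^[e] ⁻¹' A ∩ ψ₂^[e] ⁻¹' A) := by
    intro u v e
    have e1 : C (u+e) v = Θ u v ⁻¹' (ψ₁^[e] ⁻¹' A) := by
      ext x
      have h : Θ (u+e) v x = ψ₁^[e] (Θ u v x) := by
        show ψ₁^[u+e] (ψ₂^[v] x) = ψ₁^[e] (ψ₁^[u] (ψ₂^[v] x))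
        rw [add_comm, Function.iterate_add_apply]
      simp only [hCdef, Set.mem_preimage, h]
    have e2 : C u (v+e) = Θ u v ⁻¹' (ψ₂^[e] ⁻¹' A) := by
      ext x
      have h : Θ u (v+e) x = ψ₂^[e] (Θ u v x) := by
        show ψ₁^[u] (ψ₂^[v+e] x) = ψ₂^[e] (ψ₁^[u] (ψ₂^[v] x))
        rw [add_comm, Function.iterate_add_apply]
        exact ((hc.iterate_left u).iterate_right e) (ψ₂^[v] x)
      simp only [hCdef, Set.mem_preimage, h]
    rw [e1, e2]
    simp only [hCdef, Set.preimage_inter]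

  -- grids
  set B : Finset (ℕ × ℕ) := Finset.range N ×ˢ Finset.range N with hB
  set Tt : Finset (ℕ × ℕ) := Finset.range (3*N) ×ˢ Finset.range (3*N) with hTt
  set D : ℕ × ℕ → ℕ × ℕ → Set Ω := fun t p =>
    if p.1 ≤ t.1 ∧ p.2 ≤ t.2 then C p.1 p.2 ∩ C (t.1 - p.1) (t.2 - p.2) else ∅ with hD
  have hDm : ∀ t p, MeasurableSet (D t p) := by
    intro t p
    simp only [hD]
    split
    · exact (hCm _ _).inter (hCm _ _)
    · exact MeasurableSet.empty
  have hBcard : (B.card : ℝ) = (N:ℝ)^2 := by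
    rw [hB, Finset.card_product, Finset.card_range]; push_cast; ring
  -- Jensen / second moment
  set φ : Ω → ℝ := fun x => ∑ p ∈ B, (C p.1 p.2).indicator (fun _ => (1:ℝ)) x with hφ
  have hind_int : ∀ (s : Set Ω), MeasurableSet s → Integrable (s.indicator fun _ => (1:ℝ)) P :=
    fun s hs => (integrable_const (1:ℝ)).indicator hs
  have hφint : Integrable φ P := integrable_finset_sum _ (fun p _ => hind_int _ (hCm _ _))
  have hφval : ∫ x, φ x ∂P = (N:ℝ)^2 * (P A).toReal := by
    rw [hφ, integral_finset_sum _ (fun p _ => hind_int _ (hCm _ _))]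
    have h : ∀ p ∈ B, ∫ x, (C p.1 p.2).indicator (fun _ => (1:ℝ)) x ∂P = (P A).toReal := by
      intro p _
      rw [integral_indicator_const (1:ℝ) (hCm _ _), measureReal_def, hPC, smul_eq_mul, mul_one]
    rw [Finset.sum_congr rfl h, Finset.sum_const, nsmul_eq_mul, hBcard]
  have hφsq : ∀ x, φ x * φ x = ∑ p ∈ B, ∑ q ∈ B,
      (C p.1 p.2 ∩ C q.1 q.2).indicator (fun _ => (1:ℝ)) x := by
    intro x
    rw [hφ, Finset.sum_mul_sum]
    exact Finset.sum_congr rfl fun p _ => Finset.sum_congr rfl fun q _ =>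
      fk_indicator_mul _ _ x
  have hφ2int : Integrable (fun x => φ x * φ x) P := by
    have h : (fun x => φ x * φ x) = fun x => ∑ p ∈ B, ∑ q ∈ B,
        (C p.1 p.2 ∩ C q.1 q.2).indicator (fun _ => (1:ℝ)) x := funext hφsq
    rw [h]
    exact integrable_finset_sum _ fun p _ => integrable_finset_sum _ fun q _ =>
      hind_int _ ((hCm _ _).inter (hCm _ _))
  have hφ2val : ∫ x, φ x * φ x ∂P
      = ∑ p ∈ B, ∑ q ∈ B, (P (C p.1 p.2 ∩ C q.1 q.2)).toReal := by
    have h : (fun x => φ x * φ x) = fun x => ∑ p ∈ B, ∑ q ∈ B,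
        (C p.1 p.2 ∩ C q.1 q.2).indicator (fun _ => (1:ℝ)) x := funext hφsq
    rw [h, integral_finset_sum _ (fun p _ => integrable_finset_sum _ fun q _ =>
      hind_int _ ((hCm _ _).inter (hCm _ _)))]
    refine Finset.sum_congr rfl fun p _ => ?_
    rw [integral_finset_sum _ (fun q _ => hind_int _ ((hCm _ _).inter (hCm _ _)))]
    refine Finset.sum_congr rfl fun q _ => ?_
    rw [integral_indicator_const (1:ℝ) ((hCm _ _).inter (hCm _ _)), smul_eq_mul, mul_one, measureReal_def]
  have jensen : δ^2 * (N:ℝ)^4 ≤ ∑ p ∈ B, ∑ q ∈ B, (P (C p.1 p.2 ∩ C q.1 q.2)).toReal := by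
    have h := fk_sq_integral P φ hφint hφ2int
    rw [hφval, hφ2val] at h
    have hδA : (0:ℝ) ≤ (P A).toReal := ENNReal.toReal_nonneg
    have haa : δ * δ ≤ (P A).toReal * (P A).toReal := mul_le_mul hδ hδ hδ0.le hδA
    have hN4 : (0:ℝ) ≤ (N:ℝ)^4 := by positivity
    have key2 : δ^2 * (N:ℝ)^4 ≤ ((N:ℝ)^2*(P A).toReal) * ((N:ℝ)^2*(P A).toReal) := by
      nlinarith [haa, hN4]
    linarith [h, key2]
  -- reindexing: diagonal sums dominate the double sum
  have hre : ∑ p ∈ B, ∑ q ∈ B, (P (C p.1 p.2 ∩ C q.1 q.2)).toReal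
      ≤ ∑ t ∈ Tt, ∑ p ∈ B, (P (D t p)).toReal := by
    have L : ∑ r ∈ B ×ˢ B, (P (C r.1.1 r.1.2 ∩ C r.2.1 r.2.2)).toReal
        = ∑ p ∈ B, ∑ q ∈ B, (P (C p.1 p.2 ∩ C q.1 q.2)).toReal := Finset.sum_product _ _ _
    have R : ∑ r ∈ Tt ×ˢ B, (P (D r.1 r.2)).toReal
        = ∑ t ∈ Tt, ∑ p ∈ B, (P (D t p)).toReal := Finset.sum_product _ _ _
    rw [← L, ← R]
    set ι : (ℕ×ℕ)×(ℕ×ℕ) → (ℕ×ℕ)×(ℕ×ℕ) := fun r => ((r.1.1 + r.2.1, r.1.2 + r.2.2), r.1) with hι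
    have hmemB : ∀ r ∈ B ×ˢ B, r.1.1 < N ∧ r.1.2 < N ∧ r.2.1 < N ∧ r.2.2 < N := by
      intro r hr
      rw [Finset.mem_product, hB, Finset.mem_product, Finset.mem_product] at hr
      simp only [Finset.mem_range] at hr
      exact ⟨hr.1.1, hr.1.2, hr.2.1, hr.2.2⟩
    have hinj : ∀ r ∈ B ×ˢ B, ∀ r' ∈ B ×ˢ B, ι r = ι r' → r = r' := by
      intro r _ r' _ heq
      simp only [hι, Prod.mk.injEq] at heq
      obtain ⟨⟨h11, h12⟩, h2⟩ := heq
      have e1 : r.1.1 = r'.1.1 := congrArg Prod.fst h2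
      have e2 : r.1.2 = r'.1.2 := congrArg Prod.snd h2
      have : r.2 = r'.2 := by
        have : r.2.1 = r'.2.1 := by omega
        have : r.2.2 = r'.2.2 := by omega
        exact Prod.ext ‹r.2.1 = r'.2.1› ‹r.2.2 = r'.2.2›
      exact Prod.ext h2 this
    have hterm : ∀ r ∈ B ×ˢ B,
        (P (C r.1.1 r.1.2 ∩ C r.2.1 r.2.2)).toReal = (P (D (ι r).1 (ι r).2)).toReal := by
      intro r hr
      have hDeq : D (ι r).1 (ι r).2 = C r.1.1 r.1.2 ∩ C r.2.1 r.2.2 := by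
        show D (r.1.1 + r.2.1, r.1.2 + r.2.2) r.1 = _
        rw [hD]
        dsimp only
        rw [if_pos ⟨Nat.le_add_right _ _, Nat.le_add_right _ _⟩,
          Nat.add_sub_cancel_left, Nat.add_sub_cancel_left]
      rw [hDeq]
    calc ∑ r ∈ B ×ˢ B, (P (C r.1.1 r.1.2 ∩ C r.2.1 r.2.2)).toReal
        = ∑ r ∈ B ×ˢ B, (P (D (ι r).1 (ι r).2)).toReal := Finset.sum_congr rfl hterm
      _ = ∑ r ∈ (B ×ˢ B).image ι, (P (D r.1 r.2)).toReal :=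
          (Finset.sum_image (f := fun r : (ℕ×ℕ)×(ℕ×ℕ) => (P (D r.1 r.2)).toReal) hinj).symm
      _ ≤ ∑ r ∈ Tt ×ˢ B, (P (D r.1 r.2)).toReal := by
          refine Finset.sum_le_sum_of_subset_of_nonneg ?_ (fun _ _ _ => ENNReal.toReal_nonneg)
          intro r hr
          rw [Finset.mem_image] at hr
          obtain ⟨r₀, hr₀, rfl⟩ := hr
          obtain ⟨a1, a2, a3, a4⟩ := hmemB r₀ hr₀
          show ((r₀.1.1 + r₀.2.1, r₀.1.2 + r₀.2.2), r₀.1) ∈ Tt ×ˢ B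
          rw [Finset.mem_product]
          constructor
          · rw [hTt, Finset.mem_product]
            dsimp only
            simp only [Finset.mem_range]
            omega
          · rw [Finset.mem_product] at hr₀
            exact hr₀.1
  -- pigeonhole in t
  have hTne : Tt.Nonempty := by
    rw [hTt]
    refine Finset.Nonempty.product ?_ ?_ <;> (rw [Finset.nonempty_range_iff]; omega)
  have hTcard : (Tt.card : ℝ) = 9 * (N:ℝ)^2 := by
    rw [hTt, Finset.card_product, Finset.card_range]; push_cast; ring
  have hpig : ∃ t ∈ Tt, δ^2 * (N:ℝ)^2 / 9 ≤ ∑ p ∈ B, (P (D t p)).toReal := by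
    by_contra hcon
    push_neg at hcon
    have hlt : ∑ t ∈ Tt, ∑ p ∈ B, (P (D t p)).toReal
        < ∑ _t ∈ Tt, (δ^2 * (N:ℝ)^2 / 9) :=
      Finset.sum_lt_sum_of_nonempty hTne (fun t ht => hcon t ht)
    rw [Finset.sum_const, nsmul_eq_mul, hTcard] at hlt
    nlinarith [jensen, hre, hlt]
  obtain ⟨t, htT, hts⟩ := hpig

  -- reverse Markov for the chosen t
  set g : Ω → ℝ := fun x => ∑ p ∈ B, (D t p).indicator (fun _ => (1:ℝ)) x with hg
  have hgint : Integrable g P := integrable_finset_sum _ fun p _ => hind_int _ (hDm _ _)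
  have hgmeas : Measurable g := Finset.measurable_sum _ fun p _ =>
    measurable_const.indicator (hDm _ _)
  have hgval : ∫ x, g x ∂P = ∑ p ∈ B, (P (D t p)).toReal := by
    rw [hg, integral_finset_sum _ (fun p _ => hind_int _ (hDm _ _))]
    exact Finset.sum_congr rfl fun p _ => by
      rw [integral_indicator_const (1:ℝ) (hDm _ _), smul_eq_mul, mul_one, measureReal_def]
  have hgle : ∀ x, g x ≤ (N:ℝ)^2 := by
    intro x
    have h1 : g x ≤ ∑ _p ∈ B, (1:ℝ) := by
      refine Finset.sum_le_sum fun p _ => ?_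
      by_cases hx : x ∈ D t p <;> simp [Set.indicator_apply, hx]
    rw [Finset.sum_const, nsmul_eq_mul, mul_one] at h1
    calc g x ≤ (B.card : ℝ) := h1
    _ = (N:ℝ)^2 := hBcard
  have hg0 : ∀ x, 0 ≤ g x := by
    intro x
    refine Finset.sum_nonneg fun p _ => ?_
    by_cases hx : x ∈ D t p <;> simp [Set.indicator_apply, hx]
  set E : Set Ω := {x | δ^2 * (N:ℝ)^2/18 ≤ g x} with hE
  have hEm : MeasurableSet E := measurableSet_le measurable_const hgmeas
  have hPE : δ^2/18 ≤ (P E).toReal := by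
    have hsplit : ∫ x in E, g x ∂P + ∫ x in Eᶜ, g x ∂P = ∫ x, g x ∂P :=
      integral_add_compl hEm hgint
    have h1 : ∫ x in E, g x ∂P ≤ (P E).toReal * (N:ℝ)^2 := by
      calc ∫ x in E, g x ∂P ≤ ∫ _x in E, (N:ℝ)^2 ∂P :=
            setIntegral_mono_on hgint.integrableOn
              (integrableOn_const (measure_ne_top P E)) hEm fun x _ => hgle x
        _ = (P E).toReal * (N:ℝ)^2 := by rw [setIntegral_const, smul_eq_mul, measureReal_def]
    have h2 : ∫ x in Eᶜ, g x ∂P ≤ δ^2 * (N:ℝ)^2/18 := by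
      have hcle : ∀ x ∈ Eᶜ, g x ≤ δ^2 * (N:ℝ)^2/18 := by
        intro x hx
        have : ¬ (δ^2 * (N:ℝ)^2/18 ≤ g x) := hx
        linarith [lt_of_not_ge this]
      calc ∫ x in Eᶜ, g x ∂P ≤ ∫ _x in Eᶜ, (δ^2 * (N:ℝ)^2/18) ∂P :=
            setIntegral_mono_on hgint.integrableOn
              (integrableOn_const (measure_ne_top P Eᶜ)) hEm.compl hcle
        _ = (P Eᶜ).toReal * (δ^2 * (N:ℝ)^2/18) := by rw [setIntegral_const, smul_eq_mul, measureReal_def]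
        _ ≤ 1 * (δ^2 * (N:ℝ)^2/18) := by
            have hle1 : (P Eᶜ).toReal ≤ 1 := by
              have := prob_le_one (μ := P) (s := Eᶜ)
              calc (P Eᶜ).toReal ≤ (1 : ℝ≥0∞).toReal := ENNReal.toReal_mono (by simp) this
                _ = 1 := by simp
            have : (0:ℝ) ≤ δ^2 * (N:ℝ)^2/18 := by positivity
            exact mul_le_mul_of_nonneg_right hle1 this
        _ = δ^2 * (N:ℝ)^2/18 := one_mul _
    have hNpos : (0:ℝ) < (N:ℝ)^2 := by
      have : (0:ℝ) < (N:ℝ) := by exact_mod_cast hN1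
      positivity
    nlinarith [hts, hgval, hsplit, h1, h2]
  -- the good event
  set GE : ℕ → Set Ω := fun e => A ∩ ψ₁^[e] ⁻¹' A ∩ ψ₂^[e] ⁻¹' A with hGE
  have hGEm : ∀ e, MeasurableSet (GE e) :=
    fun e => (hA.inter ((h₁.measurable.iterate e) hA)).inter ((h₂.measurable.iterate e) hA)
  set I : Finset ((ℕ × ℕ) × ℕ) := Tt ×ˢ Finset.Icc 1 N with hI
  set Good : Set Ω := ⋃ r ∈ I, Θ r.1.1 r.1.2 ⁻¹' (GE r.2) with hGood
  have ht3N : t.1 < 3*N ∧ t.2 < 3*N := by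
    rw [hTt, Finset.mem_product] at htT
    simpa only [Finset.mem_range] using htT
  have hEGood : E ⊆ Good := by
    intro x hx
    set F : Finset (ℕ × ℕ) := B.filter (fun p => x ∈ D t p) with hF
    have hgx : g x = (F.card : ℝ) := by
      have h : ∀ p ∈ B, (D t p).indicator (fun _ => (1:ℝ)) x
          = if x ∈ D t p then 1 else 0 := fun p _ => Set.indicator_apply _ _ _
      calc g x = ∑ p ∈ B, (if x ∈ D t p then (1:ℝ) else 0) := Finset.sum_congr rfl h
        _ = (F.card : ℝ) := by rw [Finset.sum_boole, hF]
    have hcard : δ^2/18 * (N:ℝ)^2 ≤ (F.card : ℝ) := by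
      have hxE : δ^2 * (N:ℝ)^2/18 ≤ g x := hx
      rw [hgx] at hxE
      linarith
    have hsub : F ⊆ Finset.range N ×ˢ Finset.range N := by
      rw [hF, hB]; exact Finset.filter_subset _ _
    have hncf : ¬ IsCornerFree (↑F : Set (ℕ × ℕ)) :=
      corners_theorem_nat (by positivity) hN F hsub hcard
    unfold IsCornerFree at hncf
    push_neg at hncf
    obtain ⟨x₁, y₁, x₂, y₂, hcor, hne⟩ := hncf
    obtain ⟨m11, m12, m21, hsum⟩ := hcor
    have hmem : ∀ a b, (a, b) ∈ (↑F : Set (ℕ × ℕ)) →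
        a < N ∧ b < N ∧ a ≤ t.1 ∧ b ≤ t.2 ∧ x ∈ C a b ∧ x ∈ C (t.1 - a) (t.2 - b) := by
      intro a b hab
      rw [Finset.mem_coe, hF, Finset.mem_filter] at hab
      obtain ⟨habB, habD⟩ := hab
      rw [hB, Finset.mem_product] at habB
      simp only [Finset.mem_range] at habB
      rw [hD] at habD
      dsimp only at habD
      by_cases hcond : a ≤ t.1 ∧ b ≤ t.2
      · rw [if_pos hcond] at habD
        exact ⟨habB.1, habB.2, hcond.1, hcond.2, habD.1, habD.2⟩
      · rw [if_neg hcond] at habD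
        exact absurd habD (Set.notMem_empty x)
    obtain ⟨hx₁N, hy₁N, hx₁t, hy₁t, hCx₁y₁, hRx₁y₁⟩ := hmem _ _ m11
    obtain ⟨hx₁N', hy₂N, hx₁t', hy₂t, hCx₁y₂, hRx₁y₂⟩ := hmem _ _ m12
    obtain ⟨hx₂N, hy₁N', hx₂t, hy₁t', hCx₂y₁, hRx₂y₁⟩ := hmem _ _ m21
    rcases Nat.lt_or_ge x₁ x₂ with hlt | hge
    · -- positively oriented corner
      set e := x₂ - x₁ with he
      have hx2 : x₂ = x₁ + e := by omega
      have hy2 : y₂ = y₁ + e := by omega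
      have hrI : ((x₁, y₁), e) ∈ I := by
        rw [hI, Finset.mem_product]
        refine ⟨?_, ?_⟩
        · rw [hTt, Finset.mem_product]
          simp only [Finset.mem_range]
          omega
        · rw [Finset.mem_Icc]; omega
      refine Set.mem_iUnion₂.2 ⟨((x₁, y₁), e), hrI, ?_⟩
      show x ∈ Θ x₁ y₁ ⁻¹' (GE e)
      rw [hGE]
      rw [← hpat]
      exact ⟨⟨hCx₁y₁, hx2 ▸ hCx₂y₁⟩, hy2 ▸ hCx₁y₂⟩
    · -- negatively oriented corner: reflect through t
      set e := x₁ - x₂ with he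
      have he1 : 1 ≤ e := by omega
      have hy12 : y₁ = y₂ + e := by omega
      set q₁ := t.1 - x₁ with hq₁
      set q₂ := t.2 - y₁ with hq₂
      have hrI : ((q₁, q₂), e) ∈ I := by
        rw [hI, Finset.mem_product]
        refine ⟨?_, ?_⟩
        · rw [hTt, Finset.mem_product]
          simp only [Finset.mem_range]
          omega
        · rw [Finset.mem_Icc]; omega
      refine Set.mem_iUnion₂.2 ⟨((q₁, q₂), e), hrI, ?_⟩
      show x ∈ Θ q₁ q₂ ⁻¹' (GE e)
      rw [hGE]
      rw [← hpat]
      refine ⟨⟨hRx₁y₁, ?_⟩, ?_⟩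
      · have hq : t.1 - x₂ = q₁ + e := by omega
        rw [← hq]
        exact hRx₂y₁
      · have hq : t.2 - y₂ = q₂ + e := by omega
        rw [← hq]
        exact hRx₁y₂
  -- measure of the good event
  have hGoodle : P Good ≤ ∑ r ∈ I, P (GE r.2) := by
    calc P Good ≤ ∑ r ∈ I, P (Θ r.1.1 r.1.2 ⁻¹' (GE r.2)) := measure_biUnion_finset_le I _
      _ = ∑ r ∈ I, P (GE r.2) := Finset.sum_congr rfl fun r _ =>
          (mp _ _).measure_preimage (hGEm _).nullMeasurableSet
  have hchain : δ^2/18 ≤ ∑ r ∈ I, (P (GE r.2)).toReal := by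
    have hs_ne : ∑ r ∈ I, P (GE r.2) ≠ ⊤ :=
      (ENNReal.sum_lt_top.2 fun r _ => measure_lt_top _ _).ne
    have h1 : (P E).toReal ≤ (∑ r ∈ I, P (GE r.2)).toReal :=
      ENNReal.toReal_mono hs_ne (le_trans (measure_mono hEGood) hGoodle)
    rw [ENNReal.toReal_sum (fun r _ => measure_ne_top _ _)] at h1
    linarith [hPE, h1]
  have hIsum : ∑ r ∈ I, (P (GE r.2)).toReal
      = (Tt.card : ℝ) * ∑ e ∈ Finset.Icc 1 N, (P (GE e)).toReal := by
    rw [hI, Finset.sum_product]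
    have h : ∀ x ∈ Tt, ∑ y ∈ Finset.Icc 1 N, (P (GE (x, y).2)).toReal
        = ∑ e ∈ Finset.Icc 1 N, (P (GE e)).toReal := fun x _ => rfl
    rw [Finset.sum_congr rfl h, Finset.sum_const, nsmul_eq_mul]
  have hfin : ∃ e ∈ Finset.Icc 1 N, δ^2/162/(N:ℝ)^3 ≤ (P (GE e)).toReal := by
    by_contra hcon
    push_neg at hcon
    have hIccne : (Finset.Icc 1 N).Nonempty := ⟨1, by simp [hN1]⟩
    have hlt : ∑ e ∈ Finset.Icc 1 N, (P (GE e)).toReal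
        < ∑ _e ∈ Finset.Icc 1 N, (δ^2/162/(N:ℝ)^3) :=
      Finset.sum_lt_sum_of_nonempty hIccne hcon
    rw [Finset.sum_const, nsmul_eq_mul, Nat.card_Icc] at hlt
    have hNcast : ((N + 1 - 1 : ℕ) : ℝ) = (N:ℝ) := by push_cast; ring
    rw [hNcast] at hlt
    have hNpos : (0:ℝ) < (N:ℝ) := by exact_mod_cast hN1
    rw [hIsum, hTcard] at hchain
    have : 9 * (N:ℝ)^2 * ∑ e ∈ Finset.Icc 1 N, (P (GE e)).toReal
        < 9 * (N:ℝ)^2 * ((N:ℝ) * (δ^2/162/(N:ℝ)^3)) := by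
      have h9 : (0:ℝ) < 9 * (N:ℝ)^2 := by positivity
      exact (mul_lt_mul_iff_right₀ h9).2 hlt
    have hval : 9 * (N:ℝ)^2 * ((N:ℝ) * (δ^2/162/(N:ℝ)^3)) = δ^2/18 := by
      field_simp
      ring
    rw [hval] at this
    linarith [hchain]
  obtain ⟨e, heI, hfinal⟩ := hfin
  rw [Finset.mem_Icc] at heI
  exact ⟨e, heI.1, heI.2, hfinal⟩



end FKAux

/-- Furstenberg–Katznelson multiple recurrence for two commuting measure-preserving
transformations: if `P(A) > 0` then the Cesàro averages of
`P(A ∩ θ₁⁻ⁱA ∩ θ₂⁻ⁱA)` have positive liminf. -/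
theorem furstenberg_katznelson_two {Ω : Type*} [MeasurableSpace Ω]
    (P : Measure Ω) [IsProbabilityMeasure P]
    (θ₁ θ₂ : Ω → Ω)
    (h₁ : MeasurePreserving θ₁ P P) (h₂ : MeasurePreserving θ₂ P P)
    (hcomm : θ₁ ∘ θ₂ = θ₂ ∘ θ₁)
    (A : Set Ω) (hA : MeasurableSet A) (hpos : 0 < P A) :
    0 < liminf (fun n : ℕ =>
        (∑ i ∈ Finset.Icc 1 n, (P (A ∩ θ₁^[i] ⁻¹' A ∩ θ₂^[i] ⁻¹' A)).toReal) / n)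
      atTop := by
  classical
  set δ := (P A).toReal with hδdef
  have hδ0 : 0 < δ := ENNReal.toReal_pos hpos.ne' (measure_ne_top P A)
  set N := max (cornersTheoremBound (δ^2/18/9)) 1 with hNdef
  have hN1 : 1 ≤ N := le_max_right _ _
  have hNb : cornersTheoremBound (δ^2/18/9) ≤ N := le_max_left _ _
  have hNR0 : (0:ℝ) < (N:ℝ) := by exact_mod_cast hN1
  set c₀ := δ^2/162/(N:ℝ)^3 with hc₀def
  have hc₀ : 0 < c₀ := by
    rw [hc₀def]
    exact div_pos (div_pos (pow_pos hδ0 2) (by norm_num)) (pow_pos hNR0 3)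
  have hcθ : Function.Commute θ₁ θ₂ := fun x => congrFun hcomm x
  have hkeyE : ∀ h : ℕ, 1 ≤ h → ∃ e, 1 ≤ e ∧ e ≤ N ∧
      c₀ ≤ (P (A ∩ θ₁^[h*e] ⁻¹' A ∩ θ₂^[h*e] ⁻¹' A)).toReal := by
    intro h hh
    have hcih : Function.Commute (θ₁^[h]) (θ₂^[h]) := (hcθ.iterate_left h).iterate_right h
    obtain ⟨e, he1, heN, hpe⟩ := fk_key P (θ₁^[h]) (θ₂^[h]) (h₁.iterate h) (h₂.iterate h) hcih
      A hA δ hδ0 hδdef.le N hN1 hNb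
    refine ⟨e, he1, heN, ?_⟩
    have r1 : (θ₁^[h])^[e] = θ₁^[h*e] := (Function.iterate_mul θ₁ h e).symm
    have r2 : (θ₂^[h])^[e] = θ₂^[h*e] := (Function.iterate_mul θ₂ h e).symm
    rw [← r1, ← r2, hc₀def]
    exact hpe
  have hkey' : ∀ h : ℕ, ∃ e : ℕ, 1 ≤ h → (1 ≤ e ∧ e ≤ N ∧
      c₀ ≤ (P (A ∩ θ₁^[h*e] ⁻¹' A ∩ θ₂^[h*e] ⁻¹' A)).toReal) := by
    intro h
    by_cases hh : 1 ≤ h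
    · obtain ⟨e, he⟩ := hkeyE h hh
      exact ⟨e, fun _ => he⟩
    · exact ⟨1, fun hcon => absurd hcon hh⟩
  choose efun hefun using hkey'
  set c₁ := c₀ / (2 * (N:ℝ)^2) with hc₁def
  have hc₁ : 0 < c₁ := by
    rw [hc₁def]
    exact div_pos hc₀ (by positivity)
  have hev : ∀ n : ℕ, 2*N ≤ n →
      c₁ ≤ (∑ i ∈ Finset.Icc 1 n, (P (A ∩ θ₁^[i] ⁻¹' A ∩ θ₂^[i] ⁻¹' A)).toReal) / n := by
    intro n hn
    have hnpos : 0 < n := by omega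
    set H := n / N with hHdef
    have hH1 : 1 ≤ H := by
      rw [hHdef]
      exact (Nat.le_div_iff_mul_le (by omega)).2 (by omega)
    set mfun : ℕ → ℕ := fun h => h * efun h with hmdef
    set M := (Finset.Icc 1 H).image mfun with hMdef
    have hMsub : M ⊆ Finset.Icc 1 n := by
      intro b hb
      rw [hMdef, Finset.mem_image] at hb
      obtain ⟨h, hhH, rfl⟩ := hb
      rw [Finset.mem_Icc] at hhH
      obtain ⟨he1, heN, _⟩ := hefun h hhH.1
      rw [Finset.mem_Icc]
      constructor
      · calc 1 ≤ h := hhH.1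
          _ = h * 1 := (mul_one h).symm
          _ ≤ h * efun h := Nat.mul_le_mul_left h he1
      · calc h * efun h ≤ h * N := Nat.mul_le_mul_left h heN
          _ ≤ H * N := Nat.mul_le_mul_right N hhH.2
          _ ≤ n := by rw [hHdef]; exact Nat.div_mul_le_self n N
    have hfib : ∀ b ∈ M, ((Finset.Icc 1 H).filter (fun h => mfun h = b)).card ≤ N := by
      intro b _
      have hcard : ((Finset.Icc 1 H).filter (fun h => mfun h = b)).card
          ≤ (Finset.Icc 1 N).card := by
        refine Finset.card_le_card_of_injOn (fun h => efun h) ?_ ?_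
        · intro h hh
          rw [Finset.mem_coe, Finset.mem_filter, Finset.mem_Icc] at hh
          obtain ⟨⟨hh1, _⟩, _⟩ := hh
          obtain ⟨he1, heN, _⟩ := hefun h hh1
          rw [Finset.mem_coe, Finset.mem_Icc]; exact ⟨he1, heN⟩
        · intro a ha b' hb' heq
          simp only [Finset.coe_filter, Set.mem_setOf_eq, Finset.mem_Icc] at ha hb'
          have h1 : mfun a = mfun b' := by rw [ha.2, hb'.2]
          rw [hmdef] at h1
          dsimp only at h1
          have heq' : efun a = efun b' := heq
          obtain ⟨heb, _, _⟩ := hefun b' hb'.1.1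
          rw [heq'] at h1
          exact Nat.eq_of_mul_eq_mul_right heb h1
      rwa [Nat.card_Icc, Nat.add_sub_cancel] at hcard
    have hHcard : H ≤ N * M.card := by
      have h := Finset.card_le_mul_card_image (Finset.Icc 1 H) N
        (by rw [← hMdef]; exact hfib)
      rwa [Nat.card_Icc, Nat.add_sub_cancel] at h
    have hsumM : (M.card : ℝ) * c₀ ≤ ∑ i ∈ M, (P (A ∩ θ₁^[i] ⁻¹' A ∩ θ₂^[i] ⁻¹' A)).toReal := by
      calc (M.card : ℝ) * c₀ = ∑ _i ∈ M, c₀ := by rw [Finset.sum_const, nsmul_eq_mul]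
        _ ≤ ∑ i ∈ M, (P (A ∩ θ₁^[i] ⁻¹' A ∩ θ₂^[i] ⁻¹' A)).toReal := by
            refine Finset.sum_le_sum fun i hi => ?_
            rw [hMdef, Finset.mem_image] at hi
            obtain ⟨h, hhH, rfl⟩ := hi
            rw [Finset.mem_Icc] at hhH
            obtain ⟨_, _, hc⟩ := hefun h hhH.1
            exact hc
    have hsumall : ∑ i ∈ M, (P (A ∩ θ₁^[i] ⁻¹' A ∩ θ₂^[i] ⁻¹' A)).toReal
        ≤ ∑ i ∈ Finset.Icc 1 n, (P (A ∩ θ₁^[i] ⁻¹' A ∩ θ₂^[i] ⁻¹' A)).toReal :=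
      Finset.sum_le_sum_of_subset_of_nonneg hMsub fun i _ _ => ENNReal.toReal_nonneg
    have hnR : (0:ℝ) < (n:ℝ) := by exact_mod_cast hnpos
    have hHn : (n:ℝ) ≤ 2 * (N:ℝ) * (H:ℝ) := by
      have hmod := Nat.div_add_mod n N
      have hr : n % N < N := Nat.mod_lt n (by omega)
      have hNH : N ≤ N * H := by
        calc N = N * 1 := (mul_one N).symm
          _ ≤ N * H := Nat.mul_le_mul_left N hH1
      have h2 : n ≤ 2*N*H := by
        have : N * H + n % N ≤ N * H + N := by omega
        calc n = N * (n / N) + n % N := (Nat.div_add_mod n N).symm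
          _ = N * H + n % N := by rw [hHdef]
          _ ≤ N * H + N := by omega
          _ ≤ N * H + N * H := by omega
          _ = 2*N*H := by ring
      exact_mod_cast h2
    have hMcR : (H:ℝ) ≤ (N:ℝ) * (M.card:ℝ) := by exact_mod_cast hHcard
    rw [le_div_iff₀ hnR]
    calc c₁ * n ≤ c₀ * M.card := by
          rw [hc₁def]
          have hn2 : (n:ℝ) ≤ 2*(N:ℝ)^2 * (M.card:ℝ) := by nlinarith [hHn, hMcR, hNR0]
          have h2N : (0:ℝ) < 2*(N:ℝ)^2 := by positivity
          rw [div_mul_eq_mul_div, div_le_iff₀ h2N]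
          nlinarith [hn2, hc₀]
      _ = (M.card : ℝ) * c₀ := mul_comm _ _
      _ ≤ ∑ i ∈ Finset.Icc 1 n, (P (A ∩ θ₁^[i] ⁻¹' A ∩ θ₂^[i] ⁻¹' A)).toReal :=
          hsumM.trans hsumall
  have hple : ∀ S : Set Ω, (P S).toReal ≤ 1 := by
    intro S
    have h := ENNReal.toReal_mono (by simp : (1:ℝ≥0∞) ≠ ⊤) (prob_le_one (μ := P) (s := S))
    simpa using h
  have hb1 : ∀ n : ℕ,
      (∑ i ∈ Finset.Icc 1 n, (P (A ∩ θ₁^[i] ⁻¹' A ∩ θ₂^[i] ⁻¹' A)).toReal) / n ≤ 1 := by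
    intro n
    rcases Nat.eq_zero_or_pos n with rfl | hn
    · simp
    · rw [div_le_one (by exact_mod_cast hn)]
      calc ∑ i ∈ Finset.Icc 1 n, (P (A ∩ θ₁^[i] ⁻¹' A ∩ θ₂^[i] ⁻¹' A)).toReal
          ≤ ∑ _i ∈ Finset.Icc 1 n, (1:ℝ) := Finset.sum_le_sum fun i _ => hple _
        _ = (n:ℝ) := by
            rw [Finset.sum_const, nsmul_eq_mul, mul_one, Nat.card_Icc, Nat.add_sub_cancel]
  have hcob : IsCoboundedUnder (· ≥ ·) atTop (fun n : ℕ =>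
      (∑ i ∈ Finset.Icc 1 n, (P (A ∩ θ₁^[i] ⁻¹' A ∩ θ₂^[i] ⁻¹' A)).toReal) / n) :=
    Filter.IsBoundedUnder.isCoboundedUnder_ge (isBoundedUnder_of ⟨1, hb1⟩)
  have hlim : c₁ ≤ liminf (fun n : ℕ =>
      (∑ i ∈ Finset.Icc 1 n, (P (A ∩ θ₁^[i] ⁻¹' A ∩ θ₂^[i] ⁻¹' A)).toReal) / n) atTop :=
    le_liminf_of_le hcob (eventually_atTop.2 ⟨2*N, fun n hn => hev n hn⟩)
  exact lt_of_lt_of_le hc₁ hlim
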